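/- arXiv:math/0310161 — 4 statements merged into one kernel-verified Lean document; each statement's English description precedes it below -/
import Mathlib

section
/- With C ≠ D invertible d×d real matrices and G = {T_{Ck} g_p}, H = {T_{Dk} h_p} Bessel sequences in L²(ℝ^d), if the operator Θ = Σ_p Σ_k ⟨·, T_{Ck} g_p⟩ T_{Dk} h_p commutes with T_{Cz} for all z ∈ ℤ^d, then Θ = 0. -/
open MeasureTheory Matrix
open scoped InnerProductSpace ENNReal

noncomputable section

/-- `L²(ℝ^d)`. -/
abbrev L2 (d : ℕ) := Lp ℂ 2 (volume : Measure (Fin d → ℝ))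

/-- A sequence `x : J → H` is a Bessel sequence. -/
def Bessel {H J : Type*} [NormedAddCommGroup H] [InnerProductSpace ℂ H] (x : J → H) : Prop :=
  ∃ M : ℝ, ∀ v : H, Summable (fun j => ‖⟪v, x j⟫_ℂ‖ ^ 2) ∧
    (∑' j, ‖⟪v, x j⟫_ℂ‖ ^ 2) ≤ M * ‖v‖ ^ 2

section Aux

variable {d : ℕ} {T : (Fin d → ℝ) → (L2 d →L[ℂ] L2 d)}

/-- The key lintegral-periodicity lemma: a nonnegative function on `ℝ^d` with finite
integral that is (a.e.) periodic in a direction with positive `i`-th coordinate has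
zero integral. -/
theorem lintegral_zero_of_periodic' {d : ℕ} (G : (Fin d → ℝ) → ℝ≥0∞)
    (β : Fin d → ℝ) (i : Fin d) (hb : 0 < β i)
    (hper : ∀ᵐ x ∂(volume : Measure (Fin d → ℝ)), G (x + β) = G x)
    (hfin : ∫⁻ x, G x ≠ ⊤) : ∫⁻ x, G x = 0 := by
  set b := β i with hbdef
  set S : ℤ → Set (Fin d → ℝ) := fun n => (fun x => x i / b) ⁻¹' (Set.Ico (n : ℝ) (n + 1))
    with hS
  have hmem : ∀ (n : ℤ) (x : Fin d → ℝ), x ∈ S n ↔ ⌊x i / b⌋ = n := by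
    intro n x
    rw [hS]
    simp only [Set.mem_preimage, Set.mem_Ico]
    rw [Int.floor_eq_iff]
  have hSm : ∀ n, MeasurableSet (S n) := by
    intro n
    have hm : Measurable fun x : Fin d → ℝ => x i / b :=
      (measurable_pi_apply i).div_const _
    exact hm measurableSet_Ico
  have hdisj : Pairwise (Function.onFun Disjoint S) := by
    intro n m hnm
    rw [Function.onFun, Set.disjoint_left]
    intro x hxn hxm
    rw [hmem] at hxn hxm
    exact hnm (hxn.symm.trans hxm)
  have hcover : (⋃ n, S n) = Set.univ := by
    ext x
    simp only [Set.mem_iUnion, Set.mem_univ, iff_true]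
    exact ⟨⌊x i / b⌋, (hmem _ x).mpr rfl⟩
  have hstep : ∀ n : ℤ, ∫⁻ x in S (n + 1), G x = ∫⁻ x in S n, G x := by
    intro n
    rw [← lintegral_indicator (hSm (n + 1)), ← lintegral_indicator (hSm n)]
    rw [← lintegral_add_right_eq_self (fun x => (S (n+1)).indicator G x) β]
    refine lintegral_congr_ae ?_
    filter_upwards [hper] with x hx
    have hx1 : x + β ∈ S (n + 1) ↔ x ∈ S n := by
      rw [hmem, hmem]
      have : (x + β) i / b = x i / b + 1 := by
        have hb' : b ≠ 0 := ne_of_gt hb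
        field_simp [hbdef]
        simp [hbdef]
      rw [this, Int.floor_add_one]
      omega
    by_cases hmemx : x ∈ S n
    · rw [Set.indicator_of_mem (hx1.mpr hmemx), Set.indicator_of_mem hmemx, hx]
    · rw [Set.indicator_of_notMem (fun hc => hmemx (hx1.mp hc)),
        Set.indicator_of_notMem hmemx]
  have hall : ∀ n : ℤ, ∫⁻ x in S n, G x = ∫⁻ x in S 0, G x := by
    intro n
    induction n using Int.induction_on with
    | zero => rfl
    | succ k ih => rw [hstep k, ih]
    | pred k ih => rw [← ih, ← hstep (-k - 1)]; norm_num
  have hsum : ∑' n : ℤ, ∫⁻ x in S n, G x = ∫⁻ x, G x := by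
    rw [← lintegral_iUnion hSm hdisj, hcover, Measure.restrict_univ]
  have hc0 : ∫⁻ x in S 0, G x = 0 := by
    by_contra hc
    apply hfin
    rw [← hsum]
    calc ∑' n : ℤ, ∫⁻ x in S n, G x = ∑' _ : ℤ, ∫⁻ x in S 0, G x := tsum_congr hall
      _ = ⊤ := ENNReal.tsum_const_eq_top_of_ne_zero hc
  rw [← hsum]
  simp [fun n => (hall n).trans hc0]

/-- An element of `L²(ℝ^d)` that is a.e. invariant under translation by a nonzero
vector is zero. -/
theorem eq_zero_of_translation_invariant {d : ℕ} (β : Fin d → ℝ) (hβ : β ≠ 0) (v : L2 d)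
    (hv : (⇑v : (Fin d → ℝ) → ℂ) =ᵐ[volume] fun x => v (x - β)) : v = 0 := by
  obtain ⟨i, hi⟩ : ∃ i, β i ≠ 0 := by
    by_contra hc
    push_neg at hc
    exact hβ (funext hc)
  set G : (Fin d → ℝ) → ℝ≥0∞ := fun x => (‖v x‖₊ : ℝ≥0∞) ^ (2 : ℝ) with hG
  have hGae : AEMeasurable G volume :=
    ((Lp.aestronglyMeasurable v).enorm).pow_const (2:ℝ)
  have hfin : ∫⁻ x, G x ≠ ⊤ := by
    have h2 := lintegral_rpow_enorm_lt_top_of_eLpNorm_lt_top (f := ⇑v)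
      (p := 2) (by norm_num) (by norm_num) (Lp.eLpNorm_lt_top v)
    simpa [hG, ENNReal.toReal_ofNat, enorm_eq_nnnorm] using h2.ne
  have hper₁ : ∀ᵐ x ∂(volume : Measure (Fin d → ℝ)), G (x + β) = G x := by
    have := (measurePreserving_add_right (volume : Measure (Fin d → ℝ))
      β).quasiMeasurePreserving.ae_eq_comp hv
    filter_upwards [this] with x hx
    simp only [Function.comp, add_sub_cancel_right] at hx
    rw [hG]
    simp only
    rw [← hx]
  have hper₂ : ∀ᵐ x ∂(volume : Measure (Fin d → ℝ)), G (x + -β) = G x := by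
    filter_upwards [hv] with x hx
    rw [hG]
    simp only [← sub_eq_add_neg]
    rw [← hx]
  have hzero : ∫⁻ x, G x = 0 := by
    rcases lt_or_gt_of_ne hi with hneg | hpos
    · exact lintegral_zero_of_periodic' G (-β) i (by simpa using hneg) hper₂ hfin
    · exact lintegral_zero_of_periodic' G β i hpos hper₁ hfin
  have hae : G =ᵐ[volume] 0 := (lintegral_eq_zero_iff' hGae).mp hzero
  have hv0 : (⇑v : (Fin d → ℝ) → ℂ) =ᵐ[volume] 0 := by
    filter_upwards [hae] with x hx
    rw [hG] at hx
    simp only [Pi.zero_apply] at hx ⊢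
    have : ‖v x‖₊ = 0 := by
      by_contra hne
      rcases ENNReal.rpow_eq_zero_iff.mp hx with ⟨h1, _⟩ | ⟨h1, _⟩
      · exact hne (by exact_mod_cast h1)
      · exact absurd h1 ENNReal.coe_ne_top
    simpa using this
  exact (Lp.eq_zero_iff_ae_eq_zero).mpr hv0

variable (hT : ∀ (α : Fin d → ℝ) (f : L2 d), (⇑(T α f)) =ᵐ[volume] fun x => f (x - α))

include hT

theorem T_comp (α β : Fin d → ℝ) (f : L2 d) : T α (T β f) = T (α + β) f := by
  apply Lp.ext (p := 2) (μ := (volume : Measure (Fin d → ℝ)))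
  have h1 := hT α (T β f)
  have h2 : (fun x => (T β f) (x - α)) =ᵐ[volume] fun x => f (x - (α + β)) := by
    have := (measurePreserving_sub_right (volume : Measure (Fin d → ℝ))
      α).quasiMeasurePreserving.ae_eq_comp (hT β f)
    refine this.trans ?_
    filter_upwards with x
    simp [Function.comp, sub_sub]
  exact (h1.trans h2).trans (hT (α + β) f).symm

theorem T_zero (f : L2 d) : T 0 f = f := by
  apply Lp.ext (p := 2) (μ := (volume : Measure (Fin d → ℝ)))
  refine (hT 0 f).trans ?_
  filter_upwards with x; simp

theorem T_inner (α : Fin d → ℝ) (u w : L2 d) : ⟪T α u, T α w⟫_ℂ = ⟪u, w⟫_ℂ := by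
  rw [L2.inner_def, L2.inner_def]
  have h : (fun x => ⟪(T α u) x, (T α w) x⟫_ℂ) =ᵐ[volume]
      fun x => ⟪u (x - α), w (x - α)⟫_ℂ := by
    filter_upwards [hT α u, hT α w] with x h1 h2
    rw [h1, h2]
  rw [integral_congr_ae h]
  exact integral_sub_right_eq_self (fun y => ⟪u y, w y⟫_ℂ) α

theorem T_adjoint (α : Fin d → ℝ) (u w : L2 d) : ⟪T α u, w⟫_ℂ = ⟪u, T (-α) w⟫_ℂ := by
  conv_lhs => rw [show w = T α (T (-α) w) by
    rw [T_comp hT, add_neg_cancel, T_zero hT]]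
  rw [T_inner hT]

end Aux

/-- For invertible `d×d` real matrices `C`, `D`, Bessel systems `{T_{Ck} g_p}` and
`{T_{Dk} h_p}` in `L²(ℝ^d)` and `Θ = ∑_p ∑_k ⟨·, T_{Ck} g_p⟩ T_{Dk} h_p`, if `C ≠ D` and `Θ`
commutes with `T_{Cz}` for all `z ∈ ℤ^d`, then `Θ = 0`. -/
theorem mixed_operator_zero_of_commutes {d : ℕ} {P : Type*} [Countable P]
    (C D : Matrix (Fin d) (Fin d) ℝ) (hC : IsUnit C.det) (hD : IsUnit D.det)
    (g h : P → L2 d)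
    (T : (Fin d → ℝ) → (L2 d →L[ℂ] L2 d))
    (hT : ∀ (α : Fin d → ℝ) (f : L2 d), (⇑(T α f)) =ᵐ[volume] fun x => f (x - α))
    (hG : Bessel (fun pk : P × (Fin d → ℤ) =>
      T (C.mulVec fun i => (pk.2 i : ℝ)) (g pk.1)))
    (hH : Bessel (fun pk : P × (Fin d → ℤ) =>
      T (D.mulVec fun i => (pk.2 i : ℝ)) (h pk.1)))
    (Θ : L2 d →L[ℂ] L2 d)
    (hΘ : ∀ v : L2 d, HasSum (fun pk : P × (Fin d → ℤ) =>
      ⟪v, T (C.mulVec fun i => (pk.2 i : ℝ)) (g pk.1)⟫_ℂ •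
        T (D.mulVec fun i => (pk.2 i : ℝ)) (h pk.1)) (Θ v)) :
    C ≠ D →
    (∀ (z : Fin d → ℤ) (v : L2 d),
      Θ (T (C.mulVec fun i => (z i : ℝ)) v) = T (C.mulVec fun i => (z i : ℝ)) (Θ v)) →
    Θ = 0 := by
  intro hCD hcomm
  -- notation: real vector of an integer vector
  set ι : (Fin d → ℤ) → (Fin d → ℝ) := fun z i => ((z i : ℤ) : ℝ) with hι
  have hιsub : ∀ k z : Fin d → ℤ, ι (k - z) = ι k - ι z := by
    intro k z; funext i; simp [hι]
  -- Step 1: Θ ∘ T_{Cz} = T_{Dz} ∘ Θ for integer z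
  have key : ∀ (z : Fin d → ℤ) (v : L2 d),
      Θ (T (C.mulVec (ι z)) v) = T (D.mulVec (ι z)) (Θ v) := by
    intro z v
    have h1 := hΘ (T (C.mulVec (ι z)) v)
    have h2 := (T (D.mulVec (ι z))).hasSum (hΘ v)
    have h2' : HasSum (fun pk : P × (Fin d → ℤ) =>
        ⟪v, T (C.mulVec fun i => ((pk.2 i : ℤ) : ℝ)) (g pk.1)⟫_ℂ •
          T (D.mulVec (ι z) + D.mulVec fun i => ((pk.2 i : ℤ) : ℝ)) (h pk.1))
        (T (D.mulVec (ι z)) (Θ v)) := by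
      refine HasSum.congr_fun h2 ?_
      intro pk
      rw [ContinuousLinearMap.map_smul, T_comp hT]
    have h3 := ((Equiv.prodCongr (Equiv.refl P) (Equiv.subRight z)).hasSum_iff).mpr h2'
    refine HasSum.unique h1 (HasSum.congr_fun h3 ?_)
    rintro ⟨p, k⟩
    simp only [Function.comp_apply, Equiv.prodCongr_apply, Equiv.coe_refl, Prod.map_apply,
      id_eq, Equiv.subRight_apply]
    have hkz : (fun i => (((k - z) i : ℤ) : ℝ)) = (fun i => ((k i : ℤ) : ℝ)) - ι z := by
      funext i'; simp [hι]
    rw [hkz, Matrix.mulVec_sub, Matrix.mulVec_sub]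
    rw [T_adjoint hT, T_comp hT]
    have e1 : -(C.mulVec (ι z)) + C.mulVec (fun i => ((k i : ℤ) : ℝ)) =
        C.mulVec (fun i => ((k i : ℤ) : ℝ)) - C.mulVec (ι z) := by abel
    have e2 : D.mulVec (ι z) + (D.mulVec (fun i => ((k i : ℤ) : ℝ)) - D.mulVec (ι z)) =
        D.mulVec (fun i => ((k i : ℤ) : ℝ)) := by abel
    rw [e1, e2]
  -- Step 2: find integer z with C z ≠ D z
  obtain ⟨i, j, hij⟩ : ∃ i j, C i j ≠ D i j := by
    by_contra hc
    push_neg at hc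
    exact hCD (Matrix.ext hc)
  set z : Fin d → ℤ := Pi.single j 1 with hz
  have hιz : ι z = Pi.single j (1 : ℝ) := by
    funext i'
    by_cases hji : i' = j
    · subst hji; simp [hι, hz]
    · simp [hι, hz, Pi.single_eq_of_ne hji]
  set β : Fin d → ℝ := C.mulVec (ι z) - D.mulVec (ι z) with hβ
  have hβne : β ≠ 0 := by
    intro hc
    apply hij
    have := congrFun hc i
    rw [hβ] at this
    simp only [Pi.sub_apply, Pi.zero_apply, sub_eq_zero] at this
    simpa [hιz, Matrix.mulVec_single] using this
  -- Step 3: every Θ v is invariant under translation by β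
  have hfix : ∀ v : L2 d, T β (Θ v) = Θ v := by
    intro v
    have hcz := (hcomm z v).symm.trans (key z v)
    -- T (C ι z) (Θ v) = T (D ι z) (Θ v)
    have := congrArg (fun w => T (-(D.mulVec (ι z))) w) hcz
    rw [T_comp hT, T_comp hT, neg_add_cancel, T_zero hT] at this
    calc T β (Θ v) = T (-(D.mulVec (ι z)) + C.mulVec (ι z)) (Θ v) := by
          rw [hβ]; congr 1; abel
      _ = Θ v := this
  -- Step 4: conclude
  refine ContinuousLinearMap.ext fun v => ?_
  have h0 := hfix v
  have hv : (⇑(Θ v) : (Fin d → ℝ) → ℂ) =ᵐ[volume] fun x => (Θ v) (x - β) := by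
    have := hT β (Θ v)
    rw [h0] at this
    exact this
  rw [ContinuousLinearMap.zero_apply]
  exact eq_zero_of_translation_invariant β hβne (Θ v) hv
end
end

section
/- Let A be an expansive d×d real matrix. Then the set ∪_{n∈ℤ} A^n ℤ^d is dense in ℝ^d. -/
open Matrix Filter

/-- A real matrix is expansive if all of its (complex) eigenvalues have modulus
strictly greater than `1`. -/
def Matrix.Expansive {d : ℕ} (A : Matrix (Fin d) (Fin d) ℝ) : Prop :=
  ∀ z : ℂ, (A.map (algebraMap ℝ ℂ)).charpoly.IsRoot z → 1 < ‖z‖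

attribute [local instance] Matrix.linftyOpNormedRing Matrix.linftyOpNormedAlgebra

lemma aux_mem_spectrum_iff_isRoot {d : ℕ} (M : Matrix (Fin d) (Fin d) ℂ) (z : ℂ) :
    z ∈ spectrum ℂ M ↔ M.charpoly.IsRoot z := by
  have heval : M.charpoly.eval z = (algebraMap ℂ (Matrix (Fin d) (Fin d) ℂ) z - M).det := by
    rw [Matrix.charpoly, ← Polynomial.coe_evalRingHom, RingHom.map_det]
    congr 1
    ext i j
    by_cases h : i = j <;>
      simp [h, Matrix.charmatrix_apply, Matrix.algebraMap_matrix_apply, Matrix.diagonal_apply,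
        Matrix.scalar_apply]
  rw [spectrum.mem_iff, Polynomial.IsRoot, heval, Matrix.isUnit_iff_isUnit_det,
    isUnit_iff_ne_zero, not_ne_iff]

lemma aux_norm_map {d : ℕ} (M : Matrix (Fin d) (Fin d) ℝ) :
    ‖M.map (algebraMap ℝ ℂ)‖ = ‖M‖ := by
  rw [Matrix.linfty_opNorm_def, Matrix.linfty_opNorm_def]
  congr 1
  apply Finset.sup_congr rfl
  intro i _
  congr 1
  ext j
  simp [Matrix.map_apply]

lemma aux_tendsto_zero {d : ℕ} (hd : 0 < d) (B : Matrix (Fin d) (Fin d) ℂ)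
    (hB : ∀ z ∈ spectrum ℂ B, ‖z‖₊ < 1) :
    Tendsto (fun n : ℕ => ‖B ^ n‖) atTop (nhds 0) := by
  haveI : Nonempty (Fin d) := ⟨⟨0, hd⟩⟩
  haveI : CompleteSpace (Matrix (Fin d) (Fin d) ℂ) := FiniteDimensional.complete ℂ _
  have hrad : spectralRadius ℂ B < 1 := by
    simpa using spectrum.spectralRadius_lt_of_forall_lt B hB
  obtain ⟨c, hc1, hc2⟩ := exists_between hrad
  have hG := spectrum.pow_nnnorm_pow_one_div_tendsto_nhds_spectralRadius B
  have hev : ∀ᶠ n : ℕ in atTop, (‖B ^ n‖₊ : ENNReal) ^ (1 / (n : ℝ)) < c :=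
    hG.eventually_lt_const hc1
  have hle : ∀ᶠ n : ℕ in atTop, (‖B ^ n‖₊ : ENNReal) ≤ c ^ (n : ℕ) := by
    filter_upwards [hev, Filter.eventually_ge_atTop 1] with n hn hn1
    have hn0 : (n : ℝ) ≠ 0 := by positivity
    calc (‖B ^ n‖₊ : ENNReal)
        = ((‖B ^ n‖₊ : ENNReal) ^ (1 / (n : ℝ))) ^ (n : ℝ) := by
          rw [← ENNReal.rpow_mul, one_div, inv_mul_cancel₀ hn0, ENNReal.rpow_one]
      _ ≤ c ^ (n : ℝ) := ENNReal.rpow_le_rpow hn.le (by positivity)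
      _ = c ^ (n : ℕ) := ENNReal.rpow_natCast _ _
  have hpow : Tendsto (fun n : ℕ => c ^ n) atTop (nhds (0 : ENNReal)) :=
    ENNReal.tendsto_pow_atTop_nhds_zero_of_lt_one hc2
  have h0 : Tendsto (fun n : ℕ => (‖B ^ n‖₊ : ENNReal)) atTop (nhds 0) :=
    tendsto_of_tendsto_of_tendsto_of_le_of_le' tendsto_const_nhds hpow
      (Eventually.of_forall fun n => zero_le) hle
  have := (ENNReal.tendsto_toReal (by simp)).comp h0
  simpa [Function.comp_def] using this

/-- If `A` is an expansive `d×d` real matrix, then `⋃_{n∈ℤ} A^n ℤ^d` is dense in `ℝ^d`. -/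
theorem dense_iUnion_zpow_smul_lattice {d : ℕ} (A : Matrix (Fin d) (Fin d) ℝ)
    (hA : A.Expansive) (hAdet : IsUnit A.det) :
    Dense {x : Fin d → ℝ |
      ∃ (n : ℤ) (z : Fin d → ℤ), (A ^ n).mulVec (fun i => (z i : ℝ)) = x} := by
  rcases Nat.eq_zero_or_pos d with hd | hd
  · subst hd
    intro x
    have hx : x ∈ {x : Fin 0 → ℝ |
        ∃ (n : ℤ) (z : Fin 0 → ℤ), (A ^ n).mulVec (fun i => (z i : ℝ)) = x} :=
      ⟨0, 0, Subsingleton.elim _ _⟩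
    exact subset_closure hx
  -- main case
  set f : ℝ →+* ℂ := algebraMap ℝ ℂ with hf
  set Ac : Matrix (Fin d) (Fin d) ℂ := A.map f with hAc
  have hAcdet : IsUnit Ac.det := by
    have : Ac = f.mapMatrix A := rfl
    rw [this, ← RingHom.map_det]
    exact hAdet.map f
  have hu : IsUnit Ac := (Matrix.isUnit_iff_isUnit_det Ac).mpr hAcdet
  set B : Matrix (Fin d) (Fin d) ℝ := A⁻¹ with hB
  have hBA : B * A = 1 := Matrix.nonsing_inv_mul A hAdet
  have hBc : B.map f = Ac⁻¹ := by
    refine (Matrix.inv_eq_left_inv ?_).symm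
    rw [hAc, ← Matrix.map_mul, hBA, Matrix.map_one f f.map_zero f.map_one]
  -- spectrum of Ac⁻¹ is within the open unit disc
  have hspec : ∀ z ∈ spectrum ℂ (Ac⁻¹), ‖z‖₊ < 1 := by
    intro z hz
    have hcoe : ((hu.unit⁻¹ : (Matrix (Fin d) (Fin d) ℂ)ˣ) : Matrix (Fin d) (Fin d) ℂ)
        = Ac⁻¹ := by
      rw [Matrix.coe_units_inv, hu.unit_spec]
    have hz0 : z ≠ 0 := by
      intro h
      rw [h, spectrum.zero_mem_iff] at hz
      exact hz (hcoe ▸ (hu.unit⁻¹).isUnit)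
    have hinv : z⁻¹ ∈ spectrum ℂ Ac := by
      have h1 : ((Units.mk0 z hz0)⁻¹ : ℂˣ)⁻¹ = Units.mk0 z hz0 := inv_inv _
      have := (spectrum.inv_mem_iff (r := (Units.mk0 z hz0)⁻¹) (a := hu.unit)).mpr
      simp only [h1, Units.val_mk0, hcoe, hu.unit_spec] at this
      simpa using this hz
    have hroot : Ac.charpoly.IsRoot z⁻¹ := (aux_mem_spectrum_iff_isRoot Ac z⁻¹).mp hinv
    have h1 : 1 < ‖z⁻¹‖ := hA z⁻¹ hroot
    rw [norm_inv] at h1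
    have habs : 0 < ‖z‖ := by
      simpa using (norm_pos_iff).mpr hz0
    have habs1 : ‖z‖ < 1 := by
      rw [one_lt_inv_iff₀] at h1
      exact h1.2
    have : ‖z‖ < 1 := habs1
    exact_mod_cast this
  have htend : Tendsto (fun n : ℕ => ‖B ^ n‖) atTop (nhds 0) := by
    have h1 := aux_tendsto_zero hd (Ac⁻¹) hspec
    have h2 : ∀ n : ℕ, ‖(Ac⁻¹) ^ n‖ = ‖B ^ n‖ := by
      intro n
      rw [← hBc]
      have : (B.map f) ^ n = (B ^ n).map f := by
        have := map_pow (f.mapMatrix) B n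
        simpa [RingHom.mapMatrix_apply] using this.symm
      rw [this, aux_norm_map]
    simpa only [h2] using h1
  -- density
  rw [Metric.dense_iff]
  intro x ε hε
  obtain ⟨m, hm⟩ := (htend.eventually_lt_const hε).exists
  set y : Fin d → ℝ := (A ^ m) *ᵥ x with hy
  set zi : Fin d → ℤ := fun i => round (y i) with hzi
  set zv : Fin d → ℝ := fun i => ((zi i : ℤ) : ℝ) with hzv
  set e : Fin d → ℝ := y - zv with he
  have hBAm : B ^ m * A ^ m = 1 := by
    rw [hB, Matrix.inv_pow']
    exact Matrix.nonsing_inv_mul (A ^ m) (by simpa [Matrix.det_pow] using hAdet.pow m)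
  have hxy : (B ^ m) *ᵥ y = x := by
    rw [hy, Matrix.mulVec_mulVec, hBAm, Matrix.one_mulVec]
  have hp : (B ^ m) *ᵥ zv = x - (B ^ m) *ᵥ e := by
    rw [he, Matrix.mulVec_sub, hxy]
    abel
  have hemem : (B ^ m) *ᵥ zv ∈ {x : Fin d → ℝ |
      ∃ (n : ℤ) (z : Fin d → ℤ), (A ^ n).mulVec (fun i => (z i : ℝ)) = x} := by
    refine ⟨-(m : ℤ), zi, ?_⟩
    rw [Matrix.zpow_neg_natCast, ← Matrix.inv_pow']
  refine ⟨(B ^ m) *ᵥ zv, Metric.mem_ball.mpr ?_, hemem⟩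
  have hdist : dist ((B ^ m) *ᵥ zv) x = ‖(B ^ m) *ᵥ e‖ := by
    rw [dist_eq_norm, hp]
    simp
  rw [hdist]
  have hemax : ‖e‖ ≤ 1 := by
    rw [pi_norm_le_iff_of_nonneg zero_le_one]
    intro i
    have := abs_sub_round (y i)
    rw [he, hzv]
    simp only [Pi.sub_apply]
    rw [Real.norm_eq_abs]
    calc |y i - (zi i : ℝ)| ≤ 1/2 := by rw [hzi]; exact this
      _ ≤ 1 := by norm_num
  calc ‖(B ^ m) *ᵥ e‖ ≤ ‖B ^ m‖ * ‖e‖ := Matrix.linfty_opNorm_mulVec _ _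
    _ ≤ ‖B ^ m‖ * 1 := by
        apply mul_le_mul_of_nonneg_left hemax (norm_nonneg _)
    _ = ‖B ^ m‖ := mul_one _
    _ < ε := hm
end

section
/- Let A, B be expansive matrices and suppose the affine systems U_A(Ψ) = {D_A^n T_z ψ_i} and U_B(Φ) = {D_B^n T_z φ_i} (n ∈ ℤ, z ∈ ℤ^d, i = 1,…,r) are Bessel. Define Θ⁺ = Σ_i Σ_{n>0} Σ_z ⟨·, D_A^n T_z ψ_i⟩ D_B^n T_z φ_i, Θ⁻ analogously with n<0, and Θ⁰ = Σ_i Σ_z ⟨·, T_z ψ_i⟩ T_z φ_i. Then D_B^{−1} Θ⁺ D_A = Θ⁺ + Θ⁰; consequently Θ⁰ = 0 implies Θ⁺ = 0, and conversely Θ⁺ = 0 implies Θ⁰ = 0. -/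
open MeasureTheory Matrix
open scoped InnerProductSpace

noncomputable section

variable {d : ℕ}

lemma mulVec_measurable (M : Matrix (Fin d) (Fin d) ℝ) : Measurable (M.mulVec) := by
  have : (M.mulVec) = ⇑(Matrix.toLin' M) := by
    funext x; simp [Matrix.toLin'_apply]
  rw [this]
  exact (LinearMap.continuous_of_finiteDimensional _).measurable

lemma map_mulVec_volume (M : Matrix (Fin d) (Fin d) ℝ) (h : M.det ≠ 0) :
    Measure.map (M.mulVec) (volume : Measure (Fin d → ℝ))
      = ENNReal.ofReal |M.det⁻¹| • volume := by
  have := Real.map_matrix_volume_pi_eq_smul_volume_pi (M := M) h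
  have hc : ⇑(Matrix.toLin' M) = M.mulVec := by
    funext x; simp [Matrix.toLin'_apply]
  rwa [hc] at this

lemma qmp_mulVec (M : Matrix (Fin d) (Fin d) ℝ) (h : M.det ≠ 0) :
    Measure.QuasiMeasurePreserving (M.mulVec)
      (volume : Measure (Fin d → ℝ)) volume := by
  refine ⟨mulVec_measurable M, ?_⟩
  rw [map_mulVec_volume M h]
  exact Measure.AbsolutelyContinuous.rfl.smul_left _

lemma Dpow_comp (A : Matrix (Fin d) (Fin d) ℝ) (hAdet : IsUnit A.det)
    (Dpow : ℤ → (L2 d →L[ℂ] L2 d))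
    (hD : ∀ (n : ℤ) (f : L2 d), (⇑(Dpow n f)) =ᵐ[volume]
      fun x => (Real.sqrt |(A ^ n).det| : ℂ) * f ((A ^ n).mulVec x))
    (m n : ℤ) (f : L2 d) : Dpow m (Dpow n f) = Dpow (m + n) f := by
  refine Lp.ext ?_
  have hdm : ((A ^ m).det) ≠ 0 := (hAdet.det_zpow m).ne_zero
  have hcomp : (⇑(Dpow n f)) ∘ ((A ^ m).mulVec) =ᵐ[volume]
      (fun x => (Real.sqrt |(A ^ n).det| : ℂ) * f ((A ^ n).mulVec x)) ∘ ((A ^ m).mulVec) :=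
    (qmp_mulVec (A ^ m) hdm).ae_eq_comp (hD n f)
  filter_upwards [hD m (Dpow n f), hcomp, hD (m + n) f] with x h1 h2 h3
  rw [h1, h3]
  have h2' : (Dpow n f) ((A ^ m).mulVec x)
      = (Real.sqrt |(A ^ n).det| : ℂ) * f ((A ^ n).mulVec ((A ^ m).mulVec x)) := h2
  rw [h2']
  rw [Matrix.mulVec_mulVec, ← Matrix.zpow_add hAdet n m, add_comm n m]
  rw [Matrix.zpow_add hAdet m n, Matrix.det_mul, abs_mul,
    Real.sqrt_mul (abs_nonneg _)]
  push_cast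
  ring

lemma Dpow_zero (A : Matrix (Fin d) (Fin d) ℝ)
    (Dpow : ℤ → (L2 d →L[ℂ] L2 d))
    (hD : ∀ (n : ℤ) (f : L2 d), (⇑(Dpow n f)) =ᵐ[volume]
      fun x => (Real.sqrt |(A ^ n).det| : ℂ) * f ((A ^ n).mulVec x))
    (f : L2 d) : Dpow 0 f = f := by
  refine Lp.ext ?_
  filter_upwards [hD 0 f] with x hx
  simpa using hx

lemma Dpow_inner (A : Matrix (Fin d) (Fin d) ℝ) (hAdet : IsUnit A.det)
    (Dpow : ℤ → (L2 d →L[ℂ] L2 d))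
    (hD : ∀ (n : ℤ) (f : L2 d), (⇑(Dpow n f)) =ᵐ[volume]
      fun x => (Real.sqrt |(A ^ n).det| : ℂ) * f ((A ^ n).mulVec x))
    (n : ℤ) (v w : L2 d) : ⟪Dpow n v, Dpow n w⟫_ℂ = ⟪v, w⟫_ℂ := by
  have hdn : ((A ^ n).det) ≠ 0 := (hAdet.det_zpow n).ne_zero
  rw [L2.inner_def, L2.inner_def]
  have habs : ((Real.sqrt |(A ^ n).det| : ℝ) : ℂ) * ((Real.sqrt |(A ^ n).det| : ℝ) : ℂ)
      = ((|(A ^ n).det| : ℝ) : ℂ) := by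
    rw [← Complex.ofReal_mul, Real.mul_self_sqrt (abs_nonneg _)]
  have key : ∫ x, ⟪(Dpow n v) x, (Dpow n w) x⟫_ℂ ∂volume
      = ∫ x, ((|(A ^ n).det| : ℝ) : ℂ) * ⟪v ((A ^ n).mulVec x), w ((A ^ n).mulVec x)⟫_ℂ
        ∂volume := by
    refine integral_congr_ae ?_
    filter_upwards [hD n v, hD n w] with x h1 h2
    rw [RCLike.inner_apply, RCLike.inner_apply, h1, h2, _root_.map_mul, Complex.conj_ofReal]
    calc ((Real.sqrt |(A ^ n).det| : ℝ) : ℂ) * w ((A ^ n).mulVec x)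
          * (((Real.sqrt |(A ^ n).det| : ℝ) : ℂ) * (starRingEnd ℂ) (v ((A ^ n).mulVec x)))
        = (((Real.sqrt |(A ^ n).det| : ℝ) : ℂ) * ((Real.sqrt |(A ^ n).det| : ℝ) : ℂ))
          * (w ((A ^ n).mulVec x) * (starRingEnd ℂ) (v ((A ^ n).mulVec x))) := by ring
      _ = _ := by rw [habs]
  rw [key]
  have hg0 : AEStronglyMeasurable (fun y => ⟪v y, w y⟫_ℂ) (volume : Measure (Fin d → ℝ)) := by
    simp only [RCLike.inner_apply]
    exact (Lp.aestronglyMeasurable w).mul (Complex.continuous_conj.comp_aestronglyMeasurable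
      (Lp.aestronglyMeasurable v))
  have hg : AEStronglyMeasurable (fun y => ⟪v y, w y⟫_ℂ)
      (Measure.map ((A ^ n).mulVec) (volume : Measure (Fin d → ℝ))) := by
    rw [map_mulVec_volume _ hdn]
    exact hg0.mono_ac (Measure.AbsolutelyContinuous.rfl.smul_left _)
  have hcv : ∫ x, ⟪v ((A ^ n).mulVec x), w ((A ^ n).mulVec x)⟫_ℂ ∂volume
      = (|(A ^ n).det|⁻¹ : ℝ) • ∫ y, ⟪v y, w y⟫_ℂ ∂volume := by
    rw [← integral_map (mulVec_measurable (A ^ n)).aemeasurable hg,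
      map_mulVec_volume _ hdn, integral_smul_measure,
      ENNReal.toReal_ofReal (abs_nonneg _), abs_inv]
  rw [integral_const_mul, hcv]
  rw [Complex.real_smul, ← mul_assoc, ← Complex.ofReal_mul,
    mul_inv_cancel₀ (abs_ne_zero.2 hdn), Complex.ofReal_one, one_mul]

lemma Dpow_adjoint (A : Matrix (Fin d) (Fin d) ℝ) (hAdet : IsUnit A.det)
    (Dpow : ℤ → (L2 d →L[ℂ] L2 d))
    (hD : ∀ (n : ℤ) (f : L2 d), (⇑(Dpow n f)) =ᵐ[volume]
      fun x => (Real.sqrt |(A ^ n).det| : ℂ) * f ((A ^ n).mulVec x))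
    (m : ℤ) (v u : L2 d) : ⟪Dpow m v, u⟫_ℂ = ⟪v, Dpow (-m) u⟫_ℂ := by
  have h1 : u = Dpow m (Dpow (-m) u) := by
    rw [Dpow_comp A hAdet Dpow hD, add_neg_cancel, Dpow_zero A Dpow hD]
  conv_lhs => rw [h1]
  exact Dpow_inner A hAdet Dpow hD m v (Dpow (-m) u)

/-- Index equivalence. -/
def eSub {r d : ℕ} (P : ℤ → Prop) :
    (Fin r × {n : ℤ // P n} × (Fin d → ℤ)) ≃ {w : Fin r × ℤ × (Fin d → ℤ) // P w.2.1} where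
  toFun x := ⟨(x.1, x.2.1.1, x.2.2), x.2.1.2⟩
  invFun x := (x.1.1, ⟨x.1.2.1, x.2⟩, x.1.2.2)
  left_inv x := rfl
  right_inv x := rfl

/-- Index equivalence for the zero slice. -/
def eZero {r d : ℕ} :
    (Fin r × (Fin d → ℤ)) ≃ {w : Fin r × ℤ × (Fin d → ℤ) // w.2.1 = 0} where
  toFun x := ⟨(x.1, 0, x.2), rfl⟩
  invFun x := (x.1.1, x.1.2.2)
  left_inv x := rfl
  right_inv := by rintro ⟨⟨i, n, z⟩, h⟩; simp only at h; subst h; rfl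

/-- Shift on the index set. -/
def sh {r d : ℕ} (k : ℤ) : (Fin r × ℤ × (Fin d → ℤ)) ≃ (Fin r × ℤ × (Fin d → ℤ)) :=
  (Equiv.refl (Fin r)).prodCongr ((Equiv.addRight k).prodCongr (Equiv.refl (Fin d → ℤ)))

lemma sh_apply {r d : ℕ} (k : ℤ) (w : Fin r × ℤ × (Fin d → ℤ)) :
    sh k w = (w.1, w.2.1 + k, w.2.2) := rfl

/-- For expansive matrices `A`, `B` with Bessel affine systems `U_A(Ψ)`, `U_B(Φ)`, with
`Θ⁺ = ∑_i ∑_{n>0} ∑_z ⟨·, D_A^n T_z ψ_i⟩ D_B^n T_z φ_i`, `Θ⁻` its analogue for `n<0` and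
`Θ⁰ = ∑_i ∑_z ⟨·, T_z ψ_i⟩ T_z φ_i`, one has `D_B⁻¹ Θ⁺ D_A = Θ⁺ + Θ⁰`; consequently
`Θ⁰ = 0` implies `Θ⁺ = 0` and conversely. -/
theorem affine_theta_plus_identity {d r : ℕ}
    (A B : Matrix (Fin d) (Fin d) ℝ) (hA : A.Expansive) (hB : B.Expansive)
    (hAdet : IsUnit A.det) (hBdet : IsUnit B.det)
    (ψ φ : Fin r → L2 d)
    (T : (Fin d → ℝ) → (L2 d →L[ℂ] L2 d))
    (hT : ∀ (α : Fin d → ℝ) (f : L2 d), (⇑(T α f)) =ᵐ[volume] fun x => f (x - α))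
    (DApow DBpow : ℤ → (L2 d →L[ℂ] L2 d))
    (hDApow : ∀ (n : ℤ) (f : L2 d), (⇑(DApow n f)) =ᵐ[volume]
      fun x => (Real.sqrt |(A ^ n).det| : ℂ) * f ((A ^ n).mulVec x))
    (hDBpow : ∀ (n : ℤ) (f : L2 d), (⇑(DBpow n f)) =ᵐ[volume]
      fun x => (Real.sqrt |(B ^ n).det| : ℂ) * f ((B ^ n).mulVec x))
    (hGA : Bessel (fun w : Fin r × ℤ × (Fin d → ℤ) =>
      DApow w.2.1 (T (fun i => (w.2.2 i : ℝ)) (ψ w.1))))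
    (hGB : Bessel (fun w : Fin r × ℤ × (Fin d → ℤ) =>
      DBpow w.2.1 (T (fun i => (w.2.2 i : ℝ)) (φ w.1))))
    (Θp Θm Θ0 : L2 d →L[ℂ] L2 d)
    (hΘp : ∀ v : L2 d, HasSum (fun w : Fin r × {n : ℤ // 0 < n} × (Fin d → ℤ) =>
      ⟪v, DApow w.2.1 (T (fun i => (w.2.2 i : ℝ)) (ψ w.1))⟫_ℂ •
        DBpow w.2.1 (T (fun i => (w.2.2 i : ℝ)) (φ w.1))) (Θp v))
    (hΘm : ∀ v : L2 d, HasSum (fun w : Fin r × {n : ℤ // n < 0} × (Fin d → ℤ) =>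
      ⟪v, DApow w.2.1 (T (fun i => (w.2.2 i : ℝ)) (ψ w.1))⟫_ℂ •
        DBpow w.2.1 (T (fun i => (w.2.2 i : ℝ)) (φ w.1))) (Θm v))
    (hΘ0 : ∀ v : L2 d, HasSum (fun w : Fin r × (Fin d → ℤ) =>
      ⟪v, T (fun i => (w.2 i : ℝ)) (ψ w.1)⟫_ℂ •
        T (fun i => (w.2 i : ℝ)) (φ w.1)) (Θ0 v)) :
    (∀ v : L2 d, DBpow (-1) (Θp (DApow 1 v)) = Θp v + Θ0 v) ∧ (Θ0 = 0 ↔ Θp = 0) := by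
    classical
  set F : L2 d → (Fin r × ℤ × (Fin d → ℤ)) → L2 d := fun v w =>
    ⟪v, DApow w.2.1 (T (fun i => (w.2.2 i : ℝ)) (ψ w.1))⟫_ℂ •
      DBpow w.2.1 (T (fun i => (w.2.2 i : ℝ)) (φ w.1)) with hF
  have hp : ∀ v, HasSum ({w : Fin r × ℤ × (Fin d → ℤ) | 0 < w.2.1}.indicator (F v)) (Θp v) := by
    intro v
    refine hasSum_subtype_iff_indicator.mp ?_
    exact (Equiv.hasSum_iff (eSub (r := r) (d := d) (fun n => 0 < n))).mp (hΘp v)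
  have h0 : ∀ v, HasSum ({w : Fin r × ℤ × (Fin d → ℤ) | w.2.1 = 0}.indicator (F v)) (Θ0 v) := by
    intro v
    refine hasSum_subtype_iff_indicator.mp ?_
    refine (Equiv.hasSum_iff (eZero (r := r) (d := d))).mp ?_
    convert hΘ0 v using 1
    funext x
    show F v (x.1, 0, x.2) = _
    simp only [hF]
    rw [Dpow_zero A DApow hDApow, Dpow_zero B DBpow hDBpow]
  have key : ∀ v, HasSum ({w : Fin r × ℤ × (Fin d → ℤ) | 0 ≤ w.2.1}.indicator (F v))
      (DBpow (-1) (Θp (DApow 1 v))) := by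
    intro v
    have h1 := (DBpow (-1)).hasSum (hp (DApow 1 v))
    have he : (fun w => DBpow (-1)
          (({w : Fin r × ℤ × (Fin d → ℤ) | 0 < w.2.1}.indicator (F (DApow 1 v))) w))
        = ({w : Fin r × ℤ × (Fin d → ℤ) | 0 ≤ w.2.1}.indicator (F v)) ∘ (sh (-1)) := by
      funext w
      rcases w with ⟨i, n, z⟩
      by_cases hn : (0 : ℤ) < n
      · rw [Set.indicator_of_mem (by exact hn), Function.comp_apply, sh_apply,
          Set.indicator_of_mem (by show (0:ℤ) ≤ n + -1; omega)]
        simp only [hF]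
        rw [ContinuousLinearMap.map_smul, Dpow_adjoint A hAdet DApow hDApow 1 v,
          Dpow_comp A hAdet DApow hDApow, Dpow_comp B hBdet DBpow hDBpow,
          add_comm (-1 : ℤ) n]
      · rw [Set.indicator_of_notMem (by exact hn), map_zero, Function.comp_apply, sh_apply,
          Set.indicator_of_notMem (by show ¬ (0:ℤ) ≤ n + -1; omega)]
    rw [he] at h1
    exact (Equiv.hasSum_iff (sh (-1))).mp h1
  have part1 : ∀ v, DBpow (-1) (Θp (DApow 1 v)) = Θp v + Θ0 v := by
    intro v
    refine HasSum.unique (key v) ?_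
    have hsum := (hp v).add (h0 v)
    have he : (fun w => ({w : Fin r × ℤ × (Fin d → ℤ) | 0 < w.2.1}.indicator (F v)) w
          + ({w : Fin r × ℤ × (Fin d → ℤ) | w.2.1 = 0}.indicator (F v)) w)
        = {w : Fin r × ℤ × (Fin d → ℤ) | 0 ≤ w.2.1}.indicator (F v) := by
      funext w
      simp only [Set.indicator_apply, Set.mem_setOf_eq]
      rcases lt_trichotomy (0 : ℤ) w.2.1 with h | h | h
      · rw [if_pos h, if_neg (by omega), if_pos (by omega), add_zero]
      · rw [if_neg (by omega), if_pos h.symm, if_pos (by omega), zero_add]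
      · rw [if_neg (by omega), if_neg (by omega), if_neg (by omega), add_zero]
    rwa [he] at hsum
  refine ⟨part1, ?_, ?_⟩
  · -- Θ0 = 0 → Θp = 0
    intro hz
    have rel : ∀ v, DBpow 1 (Θp (DApow (-1) v)) = Θp v := by
      intro v
      have h1 := part1 (DApow (-1) v)
      have h2 : DApow 1 (DApow (-1) v) = v := by
        rw [Dpow_comp A hAdet DApow hDApow]
        norm_num
        exact Dpow_zero A DApow hDApow v
      rw [h2, hz, ContinuousLinearMap.zero_apply, add_zero] at h1
      rw [← h1, Dpow_comp B hBdet DBpow hDBpow]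
      norm_num
      exact Dpow_zero B DBpow hDBpow _
    have claim : ∀ N : ℕ, ∀ v,
        HasSum ({w : Fin r × ℤ × (Fin d → ℤ) | (N : ℤ) < w.2.1}.indicator (F v)) (Θp v) := by
      intro N
      induction N with
      | zero => intro v; simpa using hp v
      | succ N ih =>
        intro v
        have h1 := (DBpow 1).hasSum (ih (DApow (-1) v))
        have he : (fun w => DBpow 1
              (({w : Fin r × ℤ × (Fin d → ℤ) | (N : ℤ) < w.2.1}.indicator (F (DApow (-1) v))) w))
            = ({w : Fin r × ℤ × (Fin d → ℤ) | ((N + 1 : ℕ) : ℤ) < w.2.1}.indicator (F v))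
              ∘ (sh 1) := by
          funext w
          rcases w with ⟨i, n, z⟩
          by_cases hn : (N : ℤ) < n
          · rw [Set.indicator_of_mem (by exact hn), Function.comp_apply, sh_apply,
              Set.indicator_of_mem (by show ((N + 1 : ℕ) : ℤ) < n + 1; push_cast; omega)]
            simp only [hF]
            rw [ContinuousLinearMap.map_smul, Dpow_adjoint A hAdet DApow hDApow (-1) v,
              Dpow_comp A hAdet DApow hDApow, Dpow_comp B hBdet DBpow hDBpow,
              neg_neg, add_comm (1 : ℤ) n]
          · rw [Set.indicator_of_notMem (by exact hn), map_zero, Function.comp_apply, sh_apply,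
              Set.indicator_of_notMem (by show ¬ ((N + 1 : ℕ) : ℤ) < n + 1; push_cast; omega)]
        rw [he, rel v] at h1
        exact (Equiv.hasSum_iff (sh 1)).mp h1
    refine ContinuousLinearMap.ext fun v => ?_
    rw [ContinuousLinearMap.zero_apply]
    have hnorm : ∀ ε : ℝ, 0 < ε → ‖Θp v‖ ≤ ε := by
      intro ε hε
      obtain ⟨s, hs⟩ := summable_iff_vanishing.mp (hp v).summable
        (Metric.ball 0 ε) (Metric.ball_mem_nhds 0 hε)
      set N : ℕ := s.sup (fun w => (w.2.1).toNat) with hN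
      have hbound : ∀ t : Finset (Fin r × ℤ × (Fin d → ℤ)),
          ‖∑ w ∈ t, ({w : Fin r × ℤ × (Fin d → ℤ) | (N : ℤ) < w.2.1}.indicator (F v)) w‖ ≤ ε := by
        intro t
        have hsum_eq : ∑ w ∈ t, ({w : Fin r × ℤ × (Fin d → ℤ) | (N : ℤ) < w.2.1}.indicator (F v)) w
            = ∑ w ∈ t.filter (fun w => (N : ℤ) < w.2.1),
                ({w : Fin r × ℤ × (Fin d → ℤ) | 0 < w.2.1}.indicator (F v)) w := by
          rw [Finset.sum_filter]
          refine Finset.sum_congr rfl fun w _ => ?_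
          by_cases h : (N : ℤ) < w.2.1
          · rw [if_pos h, Set.indicator_of_mem (by exact h),
              Set.indicator_of_mem (by show (0:ℤ) < w.2.1; omega)]
          · rw [if_neg h, Set.indicator_of_notMem (by exact h)]
        rw [hsum_eq]
        have hdisj : Disjoint (t.filter (fun w => (N : ℤ) < w.2.1)) s := by
          rw [Finset.disjoint_left]
          intro w hw hws
          have h1 : (N : ℤ) < w.2.1 := (Finset.mem_filter.mp hw).2
          have h2 : (w.2.1).toNat ≤ N := Finset.le_sup (f := fun w => (w.2.1).toNat) hws
          omega
        have := hs _ hdisj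
        rw [Metric.mem_ball, dist_zero_right] at this
        exact this.le
      have htends : Filter.Tendsto
          (fun t : Finset (Fin r × ℤ × (Fin d → ℤ)) => ‖∑ w ∈ t,
            ({w : Fin r × ℤ × (Fin d → ℤ) | (N : ℤ) < w.2.1}.indicator (F v)) w‖)
          Filter.atTop (nhds ‖Θp v‖) := (claim N v).norm
      exact le_of_tendsto htends (Filter.Eventually.of_forall hbound)
    have : ‖Θp v‖ ≤ 0 := by
      by_contra h
      push_neg at h
      have := hnorm (‖Θp v‖ / 2) (by linarith)
      linarith
    simpa using norm_le_zero_iff.mp this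
  · -- Θp = 0 → Θ0 = 0
    intro hz
    refine ContinuousLinearMap.ext fun v => ?_
    have h1 := part1 v
    rw [hz] at h1
    simp only [ContinuousLinearMap.zero_apply, map_zero, zero_add] at h1
    rw [ContinuousLinearMap.zero_apply, ← h1]
end
end

section
/- If the affine frames U_{A,X}(Ψ) = {D_A^n T_{Xz} ψ_i} and U_{B,Y}(Φ) = {D_B^n T_{Yz} φ_i} are dual frames for L²(ℝ^d), then A = B. -/
open MeasureTheory Matrix
open scoped InnerProductSpace

noncomputable section

set_option linter.unusedSectionVars false

namespace DualAffineAux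

variable {d : ℕ}

lemma mulVec_continuous (M : Matrix (Fin d) (Fin d) ℝ) :
    Continuous fun x : Fin d → ℝ => M.mulVec x :=
  (LinearMap.continuous_of_finiteDimensional (Matrix.toLin' M)).congr fun x =>
    Matrix.toLin'_apply M x

lemma mulVec_map (M : Matrix (Fin d) (Fin d) ℝ) (hM : M.det ≠ 0) :
    Measure.map (fun x : Fin d → ℝ => M.mulVec x) volume = ENNReal.ofReal |M.det⁻¹| • volume := by
  have h2 := Real.map_matrix_volume_pi_eq_smul_volume_pi (M := M) hM
  rwa [show ⇑(Matrix.toLin' M) = fun x => M.mulVec x from funext fun x =>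
    Matrix.toLin'_apply M x] at h2

lemma mulVec_qmp (M : Matrix (Fin d) (Fin d) ℝ) (hM : M.det ≠ 0) :
    Measure.QuasiMeasurePreserving (fun x : Fin d → ℝ => M.mulVec x) volume volume := by
  refine ⟨(mulVec_continuous M).measurable, ?_⟩
  rw [mulVec_map M hM]
  exact Measure.smul_absolutelyContinuous

/-- compose an a.e. equality with `mulVec`. -/
lemma ae_comp_mulVec (M : Matrix (Fin d) (Fin d) ℝ) (hM : M.det ≠ 0)
    {f g : (Fin d → ℝ) → ℂ} (h : f =ᵐ[volume] g) :
    (fun x => f (M.mulVec x)) =ᵐ[volume] fun x => g (M.mulVec x) :=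
  (mulVec_qmp M hM).ae_eq_comp h

variable (M : Matrix (Fin d) (Fin d) ℝ) (hM : IsUnit M.det)
  (Dp : ℤ → (L2 d →L[ℂ] L2 d))
  (hDp : ∀ (n : ℤ) (f : L2 d), (⇑(Dp n f)) =ᵐ[volume]
    fun x => (Real.sqrt |(M ^ n).det| : ℂ) * f ((M ^ n).mulVec x))

include hM hDp

lemma Dp_comp (m n : ℤ) (f : L2 d) : Dp m (Dp n f) = Dp (n + m) f := by
  apply Lp.ext
  have hdet : ((M : Matrix (Fin d) (Fin d) ℝ) ^ m).det ≠ 0 := (hM.det_zpow m).ne_zero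
  have h1 := hDp m (Dp n f)
  have h2 : (fun x => (Dp n f) ((M ^ m).mulVec x)) =ᵐ[volume]
      fun x => (Real.sqrt |(M ^ n).det| : ℂ) * f ((M ^ n).mulVec ((M ^ m).mulVec x)) :=
    ae_comp_mulVec (M ^ m) hdet (hDp n f)
  have key : Real.sqrt |(M ^ (n + m)).det| =
      Real.sqrt |(M ^ n).det| * Real.sqrt |(M ^ m).det| := by
    rw [Matrix.zpow_add hM, det_mul, abs_mul, Real.sqrt_mul (abs_nonneg _)]
  calc ⇑(Dp m (Dp n f)) =ᵐ[volume]
      fun x => (Real.sqrt |(M ^ m).det| : ℂ) * (Dp n f) ((M ^ m).mulVec x) := h1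
    _ =ᵐ[volume] fun x => (Real.sqrt |(M ^ (n + m)).det| : ℂ)
        * f ((M ^ (n + m)).mulVec x) := by
        filter_upwards [h2.mono fun x hx => congrArg (fun z =>
          ((Real.sqrt |(M ^ m).det| : ℂ)) * z) hx] with x hx
        rw [hx, mulVec_mulVec, ← Matrix.zpow_add hM, key]
        push_cast
        ring
    _ =ᵐ[volume] ⇑(Dp (n + m) f) := (hDp (n + m) f).symm

lemma Dp_zero (f : L2 d) : Dp 0 f = f := by
  apply Lp.ext
  refine (hDp 0 f).trans ?_
  filter_upwards with x
  simp

lemma Dp_inner (m : ℤ) (f g : L2 d) : ⟪Dp m f, Dp m g⟫_ℂ = ⟪f, g⟫_ℂ := by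
  have hdetU : IsUnit ((M : Matrix (Fin d) (Fin d) ℝ) ^ m).det := hM.det_zpow m
  have hdet : ((M : Matrix (Fin d) (Fin d) ℝ) ^ m).det ≠ 0 := hdetU.ne_zero
  rw [L2.inner_def, L2.inner_def]
  set gg : (Fin d → ℝ) → ℂ := fun y => ⟪(f : (Fin d → ℝ) → ℂ) y, (g : (Fin d → ℝ) → ℂ) y⟫_ℂ
    with hggdef
  have hgg : AEStronglyMeasurable gg volume :=
    (Lp.aestronglyMeasurable f).inner (Lp.aestronglyMeasurable g)
  have h1 : (fun a => ⟪(Dp m f) a, (Dp m g) a⟫_ℂ) =ᵐ[volume]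
      fun a => ((|(M ^ m).det| : ℝ) : ℂ) * gg ((M ^ m).mulVec a) := by
    filter_upwards [hDp m f, hDp m g] with a e1 e2
    rw [e1, e2]
    simp only [hggdef, RCLike.inner_apply, _root_.map_mul, Complex.conj_ofReal]
    rw [show ((|(M ^ m).det| : ℝ) : ℂ)
        = (Real.sqrt |(M ^ m).det| : ℂ) * (Real.sqrt |(M ^ m).det| : ℂ) by
      rw [← Complex.ofReal_mul, Real.mul_self_sqrt (abs_nonneg _)]]
    ring
  rw [integral_congr_ae h1, integral_const_mul]
  have hmap := mulVec_map (M ^ m) hdet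
  have hgg' : AEStronglyMeasurable gg
      (Measure.map (fun x : Fin d → ℝ => (M ^ m).mulVec x) volume) := by
    rw [hmap]; exact hgg.mono_ac Measure.smul_absolutelyContinuous
  have h2 : ∫ a, gg ((M ^ m).mulVec a) ∂volume
      = (|(M ^ m).det|⁻¹ : ℝ) • ∫ y, gg y ∂volume := by
    rw [← integral_map ((mulVec_continuous (M ^ m)).measurable.aemeasurable) hgg', hmap,
      integral_smul_measure, ENNReal.toReal_ofReal (abs_nonneg _), abs_inv]
  rw [h2, Complex.real_smul, ← mul_assoc, ← Complex.ofReal_mul,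
    mul_inv_cancel₀ (abs_ne_zero.2 hdet), Complex.ofReal_one, one_mul]

end DualAffineAux

/-- If the affine frames `U_{A,X}(Ψ) = {D_A^n T_{Xz} ψ_i}` and `U_{B,Y}(Φ) = {D_B^n T_{Yz} φ_i}`
are dual frames for `L²(ℝ^d)`, then `A = B`. -/
theorem dual_affine_frames_same_dilation {d r : ℕ}
    (A B : Matrix (Fin d) (Fin d) ℝ) (hA : A.Expansive) (hB : B.Expansive)
    (hAdet : IsUnit A.det) (hBdet : IsUnit B.det)
    (X Y : Matrix (Fin d) (Fin d) ℝ) (hX : IsUnit X.det) (hY : IsUnit Y.det)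
    (ψ φ : Fin r → L2 d)
    (T : (Fin d → ℝ) → (L2 d →L[ℂ] L2 d))
    (hT : ∀ (α : Fin d → ℝ) (f : L2 d), (⇑(T α f)) =ᵐ[volume] fun x => f (x - α))
    (DApow DBpow : ℤ → (L2 d →L[ℂ] L2 d))
    (hDApow : ∀ (n : ℤ) (f : L2 d), (⇑(DApow n f)) =ᵐ[volume]
      fun x => (Real.sqrt |(A ^ n).det| : ℂ) * f ((A ^ n).mulVec x))
    (hDBpow : ∀ (n : ℤ) (f : L2 d), (⇑(DBpow n f)) =ᵐ[volume]
      fun x => (Real.sqrt |(B ^ n).det| : ℂ) * f ((B ^ n).mulVec x))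
    (hGA : Bessel (fun w : Fin r × ℤ × (Fin d → ℤ) =>
      DApow w.2.1 (T (X.mulVec fun i => (w.2.2 i : ℝ)) (ψ w.1))))
    (hGB : Bessel (fun w : Fin r × ℤ × (Fin d → ℤ) =>
      DBpow w.2.1 (T (Y.mulVec fun i => (w.2.2 i : ℝ)) (φ w.1))))
    (hdual : ∀ f : L2 d, HasSum (fun w : Fin r × ℤ × (Fin d → ℤ) =>
      ⟪f, DApow w.2.1 (T (X.mulVec fun i => (w.2.2 i : ℝ)) (ψ w.1))⟫_ℂ •
        DBpow w.2.1 (T (Y.mulVec fun i => (w.2.2 i : ℝ)) (φ w.1))) f) :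
    A = B := by
  have hDAc := DualAffineAux.Dp_comp A hAdet DApow hDApow
  have hDBc := DualAffineAux.Dp_comp B hBdet DBpow hDBpow
  have hDB0 := DualAffineAux.Dp_zero B hBdet DBpow hDBpow
  have hAinner := DualAffineAux.Dp_inner A hAdet DApow hDApow
  have hmain : ∀ (m : ℤ) (f : L2 d), DBpow (-m) (DApow m f) = f := by
    intro m f
    have H := (DBpow (-m)).hasSum (hdual (DApow m f))
    have hfun : (fun w : Fin r × ℤ × (Fin d → ℤ) =>
        (DBpow (-m)) (⟪DApow m f, DApow w.2.1 (T (X.mulVec fun i => (w.2.2 i : ℝ)) (ψ w.1))⟫_ℂ •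
          DBpow w.2.1 (T (Y.mulVec fun i => (w.2.2 i : ℝ)) (φ w.1))))
        = fun w : Fin r × ℤ × (Fin d → ℤ) =>
        ⟪f, DApow (w.2.1 - m) (T (X.mulVec fun i => (w.2.2 i : ℝ)) (ψ w.1))⟫_ℂ •
          DBpow (w.2.1 - m) (T (Y.mulVec fun i => (w.2.2 i : ℝ)) (φ w.1)) := by
      funext w
      rw [ContinuousLinearMap.map_smul]
      congr 1
      · conv_lhs => rw [show DApow w.2.1 (T (X.mulVec fun i => (w.2.2 i : ℝ)) (ψ w.1))
            = DApow m (DApow (w.2.1 - m) (T (X.mulVec fun i => (w.2.2 i : ℝ)) (ψ w.1))) from by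
          rw [hDAc, sub_add_cancel]]
        exact hAinner m f _
      · rw [hDBc, show w.2.1 + -m = w.2.1 - m from (sub_eq_add_neg _ _).symm]
    rw [hfun] at H
    refine HasSum.unique ?_ (hdual f)
    refine (Equiv.hasSum_iff (f := fun w : Fin r × ℤ × (Fin d → ℤ) =>
        ⟪f, DApow w.2.1 (T (X.mulVec fun i => (w.2.2 i : ℝ)) (ψ w.1))⟫_ℂ •
          DBpow w.2.1 (T (Y.mulVec fun i => (w.2.2 i : ℝ)) (φ w.1)))
        ((Equiv.refl (Fin r)).prodCongr ((Equiv.subRight m).prodCongr (Equiv.refl (Fin d → ℤ))))).mp ?_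
    exact H
  have hABpow : ∀ (m : ℤ) (f : L2 d), DApow m f = DBpow m f := by
    intro m f
    have h := congrArg (DBpow m) (hmain m f)
    rw [hDBc, show (-m : ℤ) + m = 0 from by ring, hDB0] at h
    exact h
  have keyae : ∀ f : L2 d,
      (fun x => ((Real.sqrt |A.det| : ℝ) : ℂ) * f (A.mulVec x)) =ᵐ[volume]
      fun x => ((Real.sqrt |B.det| : ℝ) : ℂ) * f (B.mulVec x) := by
    intro f
    have h1 := hDApow 1 f
    have h2 := hDBpow 1 f
    rw [zpow_one] at h1 h2
    have h3 : ⇑(DApow 1 f) = ⇑(DBpow 1 f) := by rw [hABpow 1 f]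
    rw [← h3] at h2
    exact h1.symm.trans h2
  have key2 : ∀ v x : Fin d → ℝ,
      Real.sqrt |A.det| * max 0 (1 - ‖A.mulVec x - v‖)
        = Real.sqrt |B.det| * max 0 (1 - ‖B.mulVec x - v‖) := by
    intro v x
    set G : (Fin d → ℝ) → ℝ := fun y => max 0 (1 - ‖y - v‖) with hGdef
    have contG : Continuous G :=
      continuous_const.max (continuous_const.sub (continuous_id.sub continuous_const).norm)
    set F : (Fin d → ℝ) → ℂ := fun y => (G y : ℂ) with hFdef
    have contF : Continuous F := Complex.continuous_ofReal.comp contG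
    have hsupp : HasCompactSupport F := by
      apply HasCompactSupport.intro (isCompact_closedBall v 1)
      intro y hy
      have h1 : 1 < ‖y - v‖ := by
        have := Metric.mem_closedBall.not.mp hy
        rw [dist_eq_norm] at this
        linarith [not_le.mp this]
      simp only [hFdef, hGdef]
      rw [max_eq_left (by linarith : (1:ℝ) - ‖y - v‖ ≤ 0)]
      norm_num
    have hmem : MemLp F 2 volume := contF.memLp_of_hasCompactSupport hsupp
    set f : L2 d := hmem.toLp F with hfdef
    have hf : ⇑f =ᵐ[volume] F := hmem.coeFn_toLp
    have c1 : (fun x => ((Real.sqrt |A.det| : ℝ) : ℂ) * F (A.mulVec x)) =ᵐ[volume]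
        fun x => ((Real.sqrt |B.det| : ℝ) : ℂ) * F (B.mulVec x) := by
      have hA' := DualAffineAux.ae_comp_mulVec A hAdet.ne_zero hf
      have hB' := DualAffineAux.ae_comp_mulVec B hBdet.ne_zero hf
      calc (fun x => ((Real.sqrt |A.det| : ℝ) : ℂ) * F (A.mulVec x))
          =ᵐ[volume] fun x => ((Real.sqrt |A.det| : ℝ) : ℂ) * f (A.mulVec x) := by
            filter_upwards [hA'] with x hx; rw [hx]
        _ =ᵐ[volume] fun x => ((Real.sqrt |B.det| : ℝ) : ℂ) * f (B.mulVec x) := keyae f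
        _ =ᵐ[volume] _ := by filter_upwards [hB'] with x hx; rw [hx]
    have c2 : (fun x => ((Real.sqrt |A.det| : ℝ) : ℂ) * F (A.mulVec x))
        = fun x => ((Real.sqrt |B.det| : ℝ) : ℂ) * F (B.mulVec x) :=
      (Continuous.ae_eq_iff_eq volume
        (continuous_const.mul (contF.comp (DualAffineAux.mulVec_continuous A)))
        (continuous_const.mul (contF.comp (DualAffineAux.mulVec_continuous B)))).mp c1
    have h4 := congrFun c2 x
    simp only [hFdef] at h4
    rw [← Complex.ofReal_mul, ← Complex.ofReal_mul] at h4
    have h5 := Complex.ofReal_inj.mp h4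
    simpa only [hGdef] using h5
  have hAB : ∀ x, A.mulVec x = B.mulVec x := by
    intro x
    have hcA : 0 < Real.sqrt |A.det| := Real.sqrt_pos.mpr (abs_pos.mpr hAdet.ne_zero)
    have hcB : 0 < Real.sqrt |B.det| := Real.sqrt_pos.mpr (abs_pos.mpr hBdet.ne_zero)
    have e1 := key2 (A.mulVec x) x
    have e2 := key2 (B.mulVec x) x
    rw [sub_self, norm_zero, sub_zero] at e1
    rw [sub_self, norm_zero, sub_zero] at e2
    rw [max_eq_right (zero_le_one), mul_one] at e1
    rw [max_eq_right (zero_le_one), mul_one] at e2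
    have hle1 : Real.sqrt |A.det| ≤ Real.sqrt |B.det| := by
      rw [e1]
      nlinarith [(max_le zero_le_one (by linarith [norm_nonneg (B.mulVec x - A.mulVec x)] :
          (1:ℝ) - ‖B.mulVec x - A.mulVec x‖ ≤ 1)), hcB.le]
    have hle2 : Real.sqrt |B.det| ≤ Real.sqrt |A.det| := by
      rw [← e2]
      nlinarith [(max_le zero_le_one (by linarith [norm_nonneg (A.mulVec x - B.mulVec x)] :
          (1:ℝ) - ‖A.mulVec x - B.mulVec x‖ ≤ 1)), hcA.le]
    have hceq : Real.sqrt |A.det| = Real.sqrt |B.det| := le_antisymm hle1 hle2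
    rw [← hceq] at e1
    have hmax : max 0 (1 - ‖B.mulVec x - A.mulVec x‖) = 1 :=
      (mul_left_cancel₀ hcA.ne' ((mul_one (Real.sqrt |A.det|)).trans e1)).symm
    have hnorm : ‖B.mulVec x - A.mulVec x‖ = 0 := by
      rcases max_choice 0 (1 - ‖B.mulVec x - A.mulVec x‖) with h | h
      · rw [h] at hmax; norm_num at hmax
      · rw [h] at hmax; linarith
    exact (sub_eq_zero.mp (norm_eq_zero.mp hnorm)).symm
  ext i j
  have h := hAB (Pi.single j 1)
  rw [mulVec_single_one, mulVec_single_one] at h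
  exact congrFun h i
end
end
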